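/- Discrete duality identity (eq. duality_2 of the paper): let β, γ > 0 and σ₀ ∈ ℝ^N. Suppose σ⁰ = −(β/γ)σ₀ and (σ^{n+1} − σ^n)/δt + A σ^{n+1} = 0 for all n with 0 ≤ n ≤ M−1, and suppose ξ^{M+1} = 0 and (ξ^n − ξ^{n+1})/δt + Aᵀ ξ^n = y^n for all n with 1 ≤ n ≤ M. Then Σ_{n=1}^{M} δt ⟨σ^n, y^n⟩ = −(β/γ)⟨σ₀, ξ^1⟩. -/

import Mathlib

open Matrix

/-- Discrete duality identity (eq. duality_2): if `σ⁰ = −(β/γ)σ₀`,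
`(σ^{n+1} − σ^n)/δt + A σ^{n+1} = 0` for `0 ≤ n ≤ M−1`, `ξ^{M+1} = 0` and
`(ξ^n − ξ^{n+1})/δt + Aᵀ ξ^n = y^n` for `1 ≤ n ≤ M`, then
`Σ_{n=1}^{M} δt ⟨σ^n, y^n⟩ = −(β/γ)⟨σ₀, ξ^1⟩`. -/
theorem stmt_16 {N M : ℕ} (hN : 1 ≤ N) (hM : 1 ≤ M)
    (δt : ℝ) (hδt : 0 < δt)
    (A B : Matrix (Fin N) (Fin N) ℝ)
    (β γ : ℝ) (hβ : 0 < β) (hγ : 0 < γ)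
    (σ₀ : Fin N → ℝ)
    (y σ ξ : ℕ → (Fin N → ℝ))
    (hσ0 : σ 0 = -(β / γ) • σ₀)
    (hσ : ∀ n, n ≤ M - 1 →
      (1 / δt) • (σ (n + 1) - σ n) + A.mulVec (σ (n + 1)) = 0)
    (hξM : ξ (M + 1) = 0)
    (hξ : ∀ n, 1 ≤ n → n ≤ M →
      (1 / δt) • (ξ n - ξ (n + 1)) + Aᵀ.mulVec (ξ n) = y n) :
    ∑ n ∈ Finset.Icc 1 M, δt * (σ n ⬝ᵥ y n) = -(β / γ) * (σ₀ ⬝ᵥ ξ 1) := by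
  have hδ : δt ≠ 0 := ne_of_gt hδt
  have key : ∀ n, 1 ≤ n → n ≤ M →
      δt * (σ n ⬝ᵥ y n) = σ (n - 1) ⬝ᵥ ξ n - σ n ⬝ᵥ ξ (n + 1) := by
    intro n h1 h2
    have hs := hσ (n - 1) (by omega)
    have hn : n - 1 + 1 = n := by omega
    rw [hn] at hs
    have hA : A.mulVec (σ n) = (1 / δt) • (σ (n - 1) - σ n) := by
      have h := eq_neg_of_add_eq_zero_left hs
      rw [← neg_sub (σ n) (σ (n - 1)), smul_neg, h, neg_neg]
    rw [← hξ n h1 h2, dotProduct_add, dotProduct_smul, dotProduct_mulVec,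
      vecMul_transpose, hA, smul_dotProduct, dotProduct_sub, sub_dotProduct,
      smul_eq_mul, smul_eq_mul]
    field_simp
    ring
  have hsum : ∑ n ∈ Finset.Icc 1 M, δt * (σ n ⬝ᵥ y n)
      = ∑ n ∈ Finset.Icc 1 M, (σ (n - 1) ⬝ᵥ ξ n - σ n ⬝ᵥ ξ (n + 1)) :=
    Finset.sum_congr rfl (fun n hn => by
      rw [Finset.mem_Icc] at hn; exact key n hn.1 hn.2)
  rw [hsum]
  have tele : ∀ K : ℕ, ∑ n ∈ Finset.Icc 1 K, (σ (n - 1) ⬝ᵥ ξ n - σ n ⬝ᵥ ξ (n + 1))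
      = σ 0 ⬝ᵥ ξ 1 - σ K ⬝ᵥ ξ (K + 1) := by
    intro K
    induction K with
    | zero => simp
    | succ k ih =>
      rw [Finset.sum_Icc_succ_top (by omega), ih]
      simp only [Nat.add_sub_cancel]
      ring
  rw [tele M, hξM, dotProduct_zero, sub_zero, hσ0, smul_dotProduct, smul_eq_mul]
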